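/- Fix r ∈ (0, π/2) and s ∈ [0,1]. On the geodesic ball B_r(0) of radius r centered at a point y of the round sphere S^q (identified via geodesic normal coordinates with the Euclidean ball of radius r in R^q), the radial scaling map Φ_s(x) := s·x is (sin(rs)/sin(r))-Lipschitz with respect to the spherical metric on B_r(0). -/

import Mathlib

open scoped RealInnerProductSpace
open Real Classical

/-- The exponential map of the round unit sphere `S^q ⊂ ℝ^{q+1}` at the point `y`,
applied to a tangent vector `x ⊥ y`: `exp_y(x) = cos‖x‖ · y + sin‖x‖ · x/‖x‖`. -/
noncomputable def sphereExp (q : ℕ) (y x : EuclideanSpace ℝ (Fin (q + 1))) :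
    EuclideanSpace ℝ (Fin (q + 1)) :=
  Real.cos ‖x‖ • y + (if x = 0 then 0 else (Real.sin ‖x‖ / ‖x‖) • x)

private lemma myArccos_le_arccos {x y : ℝ} (h : x ≤ y) : Real.arccos y ≤ Real.arccos x := by
  rw [Real.arccos_eq_pi_div_two_sub_arcsin, Real.arccos_eq_pi_div_two_sub_arcsin]
  have := Real.monotone_arcsin h
  linarith

private lemma cos_eq_one_sub (x : ℝ) : Real.cos x = 1 - 2 * Real.sin (x / 2) ^ 2 := by
  have h1 := Real.cos_two_mul (x / 2)
  have h2 := Real.sin_sq_add_cos_sq (x / 2)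
  have h3 : 2 * (x / 2) = x := by ring
  rw [h3] at h1
  linarith

private lemma aux_g_nonneg (s : ℝ) (hs0 : 0 ≤ s) (hs1 : s ≤ 1) {x : ℝ} (hx0 : 0 ≤ x)
    (hx : x ≤ π / 2) : 0 ≤ s * Real.cos (s * x) * Real.sin x - Real.sin (s * x) * Real.cos x := by
  set g : ℝ → ℝ := fun t => s * Real.cos (s * t) * Real.sin t - Real.sin (s * t) * Real.cos t
    with hg
  have hd : ∀ t : ℝ, HasDerivAt g ((1 - s ^ 2) * (Real.sin (s * t) * Real.sin t)) t := by
    intro t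
    have hl : HasDerivAt (fun u : ℝ => s * u) s t := by
      simpa using (hasDerivAt_id t).const_mul s
    have hc : HasDerivAt (fun u : ℝ => Real.cos (s * u)) (-Real.sin (s * t) * s) t :=
      (Real.hasDerivAt_cos (s * t)).comp t hl
    have hsn : HasDerivAt (fun u : ℝ => Real.sin (s * u)) (Real.cos (s * t) * s) t :=
      (Real.hasDerivAt_sin (s * t)).comp t hl
    have h1 := ((hc.const_mul s).mul (Real.hasDerivAt_sin t)).sub
      (hsn.mul (Real.hasDerivAt_cos t))
    refine h1.congr_deriv ?_
    ring
  have hmono : MonotoneOn g (Set.Icc 0 (π / 2)) := by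
    apply monotoneOn_of_deriv_nonneg (convex_Icc 0 (π / 2))
    · exact fun t _ => ((hd t).continuousAt).continuousWithinAt
    · exact fun t _ => ((hd t).differentiableAt).differentiableWithinAt
    · intro t ht
      rw [interior_Icc] at ht
      rw [(hd t).deriv]
      have hst : s * t ≤ t := mul_le_of_le_one_left ht.1.le hs1
      have h1 : 0 ≤ Real.sin (s * t) := by
        apply Real.sin_nonneg_of_nonneg_of_le_pi (mul_nonneg hs0 ht.1.le)
        linarith [Real.pi_pos, ht.2.le]
      have h2 : 0 ≤ Real.sin t := by
        apply Real.sin_nonneg_of_nonneg_of_le_pi ht.1.le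
        linarith [Real.pi_pos, ht.2.le]
      have hs2 : s ^ 2 ≤ 1 := by nlinarith
      have := mul_nonneg h1 h2
      nlinarith
  have h0 : g 0 = 0 := by simp [hg]
  have hx' : x ∈ Set.Icc 0 (π / 2) := ⟨hx0, hx⟩
  have h0' : (0 : ℝ) ∈ Set.Icc 0 (π / 2) := ⟨le_refl 0, by positivity⟩
  have := hmono h0' hx' hx0
  rw [h0] at this
  exact this

private lemma sin_ratio_mono (s : ℝ) (hs0 : 0 ≤ s) (hs1 : s ≤ 1) {t u : ℝ} (ht : 0 ≤ t)
    (htu : t ≤ u) (hu : u < π / 2) :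
    Real.sin (s * t) * Real.sin u ≤ Real.sin (s * u) * Real.sin t := by
  rcases eq_or_lt_of_le ht with h | ht0
  · simp [← h]
  set f : ℝ → ℝ := fun x => Real.sin (s * x) / Real.sin x with hf
  have hsinpos : ∀ x : ℝ, x ∈ Set.Icc t u → 0 < Real.sin x := by
    intro x hx
    apply Real.sin_pos_of_pos_of_lt_pi (lt_of_lt_of_le ht0 hx.1)
    linarith [Real.pi_pos, hx.2, hu]
  have hderiv : ∀ x : ℝ, Real.sin x ≠ 0 → HasDerivAt f
      ((Real.cos (s * x) * s * Real.sin x - Real.sin (s * x) * Real.cos x) / Real.sin x ^ 2) x := by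
    intro x hne
    have hl : HasDerivAt (fun u : ℝ => s * u) s x := by
      simpa using (hasDerivAt_id x).const_mul s
    have hsn : HasDerivAt (fun u : ℝ => Real.sin (s * u)) (Real.cos (s * x) * s) x :=
      (Real.hasDerivAt_sin (s * x)).comp x hl
    exact hsn.div (Real.hasDerivAt_sin x) hne
  have hmono : MonotoneOn f (Set.Icc t u) := by
    apply monotoneOn_of_deriv_nonneg (convex_Icc t u)
    · intro x hx
      exact ((hderiv x (ne_of_gt (hsinpos x hx))).continuousAt).continuousWithinAt
    · intro x hx
      rw [interior_Icc] at hx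
      exact ((hderiv x (ne_of_gt (hsinpos x
        (Set.mem_Icc_of_Ioo hx)))).differentiableAt).differentiableWithinAt
    · intro x hx
      rw [interior_Icc] at hx
      have hx' := Set.mem_Icc_of_Ioo hx
      rw [(hderiv x (ne_of_gt (hsinpos x hx'))).deriv]
      apply div_nonneg _ (by positivity)
      have := aux_g_nonneg s hs0 hs1 (le_trans ht hx'.1) (le_of_lt (lt_of_le_of_lt hx'.2 hu))
      nlinarith
  have hmem_t : t ∈ Set.Icc t u := ⟨le_refl t, htu⟩
  have hmem_u : u ∈ Set.Icc t u := ⟨htu, le_refl u⟩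
  have h := hmono hmem_t hmem_u htu
  have h1 : 0 < Real.sin t := hsinpos t hmem_t
  have h2 : 0 < Real.sin u := hsinpos u hmem_u
  rw [hf, div_le_div_iff₀ h1 h2] at h
  linarith

private lemma sin_smul_le (r s : ℝ) (hr : 0 < r) (hr2 : r < π / 2) (hs0 : 0 ≤ s) (hs1 : s ≤ 1)
    {t : ℝ} (ht : 0 ≤ t) (htr : t ≤ r) :
    Real.sin (s * t) ≤ Real.sin (r * s) / Real.sin r * Real.sin t := by
  have h := sin_ratio_mono s hs0 hs1 ht htr hr2
  have hsr : 0 < Real.sin r := Real.sin_pos_of_pos_of_lt_pi hr (by linarith [Real.pi_pos])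
  rw [mul_comm r s]
  rw [div_mul_eq_mul_div, le_div_iff₀ hsr]
  linarith

set_option maxHeartbeats 1000000 in
private lemma scalar_lemma (r s a b τ : ℝ) (hr : 0 < r) (hr2 : r < π / 2) (hs0 : 0 ≤ s)
    (hs1 : s ≤ 1) (ha0 : 0 ≤ a) (har : a < r) (hb0 : 0 ≤ b) (hbr : b < r)
    (hτ1 : -1 ≤ τ) (hτ2 : τ ≤ 1) :
    Real.arccos (Real.cos (s * a) * Real.cos (s * b) + Real.sin (s * a) * Real.sin (s * b) * τ)
      ≤ (Real.sin (r * s) / Real.sin r) *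
        Real.arccos (Real.cos a * Real.cos b + Real.sin a * Real.sin b * τ) := by
  have pi_pos := Real.pi_pos
  set K := Real.sin (r * s) / Real.sin r with hKdef
  have hrs_le : r * s ≤ r := mul_le_of_le_one_right hr.le hs1
  have hrs_0 : 0 ≤ r * s := mul_nonneg hr.le hs0
  have hsr : 0 < Real.sin r := Real.sin_pos_of_pos_of_lt_pi hr (by linarith)
  have hK0 : 0 ≤ K := by
    apply div_nonneg _ hsr.le
    apply Real.sin_nonneg_of_nonneg_of_le_pi hrs_0
    linarith
  have hK1 : K ≤ 1 := by
    rw [hKdef, div_le_one hsr]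
    exact Real.strictMonoOn_sin.monotoneOn ⟨by linarith, by linarith⟩
      ⟨by linarith, hr2.le⟩ hrs_le
  set m := (1 - τ) / 2 with hmdef
  have hm0 : 0 ≤ m := by rw [hmdef]; linarith
  have hm1 : m ≤ 1 := by rw [hmdef]; linarith
  set V := Real.cos a * Real.cos b + Real.sin a * Real.sin b * τ with hVdef
  have hVconv : V = (1 - m) * Real.cos (a - b) + m * Real.cos (a + b) := by
    rw [hVdef, hmdef, Real.cos_sub, Real.cos_add]; ring
  have hV1 : -1 ≤ V := by
    rw [hVconv]
    nlinarith [Real.neg_one_le_cos (a - b), Real.neg_one_le_cos (a + b)]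
  have hV2 : V ≤ 1 := by
    rw [hVconv]
    nlinarith [Real.cos_le_one (a - b), Real.cos_le_one (a + b)]
  set D := Real.arccos V with hDdef
  have hD0 : 0 ≤ D := Real.arccos_nonneg V
  have hDpi : D ≤ π := Real.arccos_le_pi V
  have hcosD : Real.cos D = V := Real.cos_arccos hV1 hV2
  have hsinsqD : Real.sin (D / 2) ^ 2
      = Real.sin ((a - b) / 2) ^ 2 + Real.sin a * Real.sin b * m := by
    have h1 := cos_eq_one_sub D
    have h2 := cos_eq_one_sub (a - b)
    have hVm : V = Real.cos (a - b) - 2 * (Real.sin a * Real.sin b * m) := by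
      rw [hVdef, hmdef, Real.cos_sub]; ring
    rw [hcosD] at h1
    linarith
  set Vs := Real.cos (s * a) * Real.cos (s * b) + Real.sin (s * a) * Real.sin (s * b) * τ
    with hVsdef
  have hVsm : Vs = 1 - 2 * (Real.sin (s * (a - b) / 2) ^ 2
      + Real.sin (s * a) * Real.sin (s * b) * m) := by
    have h2 := cos_eq_one_sub (s * (a - b))
    have hc : Real.cos (s * (a - b)) = Real.cos (s * a) * Real.cos (s * b)
        + Real.sin (s * a) * Real.sin (s * b) := by
      rw [show s * (a - b) = s * a - s * b by ring, Real.cos_sub]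
    rw [hc] at h2
    rw [hVsdef, hmdef]
    linarith
  have hKD0 : 0 ≤ K * D := mul_nonneg hK0 hD0
  have hKDpi : K * D ≤ π := le_trans (mul_le_of_le_one_left hD0 hK1) hDpi
  -- step 1
  have habs : |a - b| ≤ r := by
    rw [abs_le]; constructor <;> linarith
  set c := |a - b| / 2 with hcdef
  have hc0 : 0 ≤ c := by positivity
  have hcr : c ≤ r := by rw [hcdef]; linarith [abs_nonneg (a - b)]
  have hscc : s * c ≤ c := mul_le_of_le_one_left hc0 hs1
  have hsc0 : 0 ≤ Real.sin (s * c) := by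
    apply Real.sin_nonneg_of_nonneg_of_le_pi (mul_nonneg hs0 hc0)
    linarith
  have hsc1 : 0 ≤ Real.sin c := by
    apply Real.sin_nonneg_of_nonneg_of_le_pi hc0
    linarith
  have hstep1' : Real.sin (s * c) ≤ K * Real.sin c := sin_smul_le r s hr hr2 hs0 hs1 hc0 hcr
  have hsq : Real.sin (s * (a - b) / 2) ^ 2 = Real.sin (s * c) ^ 2 := by
    rcases abs_cases (a - b) with ⟨h, _⟩ | ⟨h, _⟩
    · rw [hcdef, h, show s * (a - b) / 2 = s * ((a - b) / 2) by ring]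
    · rw [hcdef, h, show s * (-(a - b) / 2) = -(s * (a - b) / 2) by ring, Real.sin_neg]
      ring
  have hsq2 : Real.sin ((a - b) / 2) ^ 2 = Real.sin c ^ 2 := by
    rcases abs_cases (a - b) with ⟨h, _⟩ | ⟨h, _⟩
    · rw [hcdef, h]
    · rw [hcdef, h, show -(a - b) / 2 = -((a - b) / 2) by ring, Real.sin_neg]
      ring
  have step1 : Real.sin (s * (a - b) / 2) ^ 2 ≤ K ^ 2 * Real.sin ((a - b) / 2) ^ 2 := by
    rw [hsq, hsq2]
    have h := pow_le_pow_left₀ hsc0 hstep1' 2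
    rw [mul_pow] at h
    exact h
  -- step 2
  have hsaa : s * a ≤ a := mul_le_of_le_one_left ha0 hs1
  have hsbb : s * b ≤ b := mul_le_of_le_one_left hb0 hs1
  have hsa0 : 0 ≤ Real.sin (s * a) := by
    apply Real.sin_nonneg_of_nonneg_of_le_pi (mul_nonneg hs0 ha0)
    linarith
  have hsb0 : 0 ≤ Real.sin (s * b) := by
    apply Real.sin_nonneg_of_nonneg_of_le_pi (mul_nonneg hs0 hb0)
    linarith
  have hsa1 : 0 ≤ Real.sin a := by
    apply Real.sin_nonneg_of_nonneg_of_le_pi ha0; linarith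
  have hsb1 : 0 ≤ Real.sin b := by
    apply Real.sin_nonneg_of_nonneg_of_le_pi hb0; linarith
  have ha' : Real.sin (s * a) ≤ K * Real.sin a := sin_smul_le r s hr hr2 hs0 hs1 ha0 har.le
  have hb' : Real.sin (s * b) ≤ K * Real.sin b := sin_smul_le r s hr hr2 hs0 hs1 hb0 hbr.le
  have step2 : Real.sin (s * a) * Real.sin (s * b) * m
      ≤ K ^ 2 * (Real.sin a * Real.sin b * m) := by
    have h1 : Real.sin (s * a) * Real.sin (s * b) ≤ (K * Real.sin a) * (K * Real.sin b) :=
      mul_le_mul ha' hb' hsb0 (mul_nonneg hK0 hsa1)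
    have h2 := mul_le_mul_of_nonneg_right h1 hm0
    have h3 : (K * Real.sin a) * (K * Real.sin b) * m
        = K ^ 2 * (Real.sin a * Real.sin b * m) := by ring
    linarith
  -- step 3 : concavity
  have hsD2 : 0 ≤ Real.sin (D / 2) := by
    apply Real.sin_nonneg_of_nonneg_of_le_pi (by linarith); linarith
  have step3 : K * Real.sin (D / 2) ≤ Real.sin (K * (D / 2)) := by
    have hconc := strictConcaveOn_sin_Icc.concaveOn.2
      (show D / 2 ∈ Set.Icc (0 : ℝ) π from ⟨by linarith, by linarith⟩)
      (show (0 : ℝ) ∈ Set.Icc (0 : ℝ) π from ⟨le_refl 0, pi_pos.le⟩)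
      hK0 (by linarith : (0:ℝ) ≤ 1 - K) (by ring)
    simpa using hconc
  have hsKD0 : 0 ≤ Real.sin (K * D / 2) := by
    apply Real.sin_nonneg_of_nonneg_of_le_pi (by linarith); linarith
  have main : Real.sin (s * (a - b) / 2) ^ 2 + Real.sin (s * a) * Real.sin (s * b) * m
      ≤ Real.sin (K * D / 2) ^ 2 := by
    have e1 : K * D / 2 = K * (D / 2) := by ring
    have h3 : (K * Real.sin (D / 2)) ^ 2 ≤ Real.sin (K * D / 2) ^ 2 := by
      rw [e1]
      exact pow_le_pow_left₀ (mul_nonneg hK0 hsD2) step3 2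
    have t1 := add_le_add step1 step2
    have t2 : (K * Real.sin (D / 2)) ^ 2 = K ^ 2 * Real.sin ((a - b) / 2) ^ 2
        + K ^ 2 * (Real.sin a * Real.sin b * m) := by
      rw [mul_pow, hsinsqD]; ring
    linarith
  have hcKD : Real.cos (K * D) ≤ Vs := by
    rw [hVsm, cos_eq_one_sub (K * D)]
    linarith
  have hfin := myArccos_le_arccos hcKD
  rwa [Real.arccos_cos hKD0 hKDpi] at hfin

private lemma inner_sphereExp (q : ℕ) (y : EuclideanSpace ℝ (Fin (q + 1))) (hy : ‖y‖ = 1)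
    (v w : EuclideanSpace ℝ (Fin (q + 1))) (hv : ⟪v, y⟫ = 0) (hw : ⟪w, y⟫ = 0) :
    ⟪sphereExp q y v, sphereExp q y w⟫ = Real.cos ‖v‖ * Real.cos ‖w‖ +
      (if v = 0 ∨ w = 0 then 0
        else (Real.sin ‖v‖ / ‖v‖) * (Real.sin ‖w‖ / ‖w‖) * ⟪v, w⟫) := by
  have hyy : ⟪y, y⟫ = (1 : ℝ) := by
    rw [real_inner_self_eq_norm_mul_norm, hy]; norm_num
  have hyw : ⟪y, w⟫ = (0 : ℝ) := by rw [real_inner_comm]; exact hw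
  unfold sphereExp
  by_cases h1 : v = 0
  · by_cases h2 : w = 0
    · rw [if_pos h1, if_pos h2, if_pos (Or.inl h1)]
      simp only [add_zero, real_inner_smul_left, real_inner_smul_right, hyy]
      ring
    · rw [if_pos h1, if_neg h2, if_pos (Or.inl h1), add_zero]
      simp only [inner_add_right, real_inner_smul_left, real_inner_smul_right, hyy, hyw]
      ring
  · by_cases h2 : w = 0
    · rw [if_neg h1, if_pos h2, if_pos (Or.inr h2), add_zero]
      simp only [inner_add_left, real_inner_smul_left, real_inner_smul_right, hyy, hv]
      ring
    · rw [if_neg h1, if_neg h2, if_neg (not_or.mpr ⟨h1, h2⟩)]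
      simp only [inner_add_left, inner_add_right, real_inner_smul_left, real_inner_smul_right,
        hyy, hyw, hv]
      ring

private lemma inner_sphereExp_smul (q : ℕ) (y : EuclideanSpace ℝ (Fin (q + 1))) (hy : ‖y‖ = 1)
    (s : ℝ) (hs : 0 ≤ s) (x₁ x₂ : EuclideanSpace ℝ (Fin (q + 1)))
    (h1 : ⟪x₁, y⟫ = 0) (h2 : ⟪x₂, y⟫ = 0) :
    ⟪sphereExp q y (s • x₁), sphereExp q y (s • x₂)⟫ =
      Real.cos (s * ‖x₁‖) * Real.cos (s * ‖x₂‖) +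
        Real.sin (s * ‖x₁‖) * Real.sin (s * ‖x₂‖) *
          (if x₁ = 0 ∨ x₂ = 0 then 1 else ⟪x₁, x₂⟫ / (‖x₁‖ * ‖x₂‖)) := by
  have hv : ⟪s • x₁, y⟫ = (0 : ℝ) := by rw [real_inner_smul_left, h1, mul_zero]
  have hw : ⟪s • x₂, y⟫ = (0 : ℝ) := by rw [real_inner_smul_left, h2, mul_zero]
  rw [inner_sphereExp q y hy _ _ hv hw]
  rw [norm_smul, norm_smul, Real.norm_eq_abs, abs_of_nonneg hs]
  by_cases hx1 : x₁ = 0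
  · simp [hx1]
  by_cases hx2 : x₂ = 0
  · simp [hx2]
  rw [if_neg (not_or.mpr ⟨hx1, hx2⟩)]
  by_cases hs0 : s = 0
  · subst hs0
    simp
  have hs' : s ≠ 0 := hs0
  rw [if_neg (not_or.mpr ⟨smul_ne_zero hs' hx1, smul_ne_zero hs' hx2⟩)]
  rw [real_inner_smul_left, real_inner_smul_right]
  have ha : ‖x₁‖ ≠ 0 := norm_ne_zero_iff.mpr hx1
  have hb : ‖x₂‖ ≠ 0 := norm_ne_zero_iff.mpr hx2
  field_simp

/-- On the geodesic ball of radius `r < π/2` (in normal coordinates at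
`y ∈ S^q`), the radial scaling `x ↦ s • x` is `(sin(rs)/sin r)`-Lipschitz for the
spherical distance. -/
theorem radial_scaling_lipschitz
    (q : ℕ) (r s : ℝ) (hr : r ∈ Set.Ioo 0 (π / 2)) (hs : s ∈ Set.Icc (0 : ℝ) 1)
    (y : EuclideanSpace ℝ (Fin (q + 1))) (hy : ‖y‖ = 1) :
    ∀ x₁ x₂ : EuclideanSpace ℝ (Fin (q + 1)),
      ⟪x₁, y⟫ = 0 → ⟪x₂, y⟫ = 0 → ‖x₁‖ < r → ‖x₂‖ < r →
      Real.arccos ⟪sphereExp q y (s • x₁), sphereExp q y (s • x₂)⟫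
        ≤ (Real.sin (r * s) / Real.sin r) * Real.arccos ⟪sphereExp q y x₁, sphereExp q y x₂⟫ := by
  obtain ⟨hr0, hr2⟩ := hr
  obtain ⟨hs0, hs1⟩ := hs
  intro x₁ x₂ h1 h2 hn1 hn2
  have e1 := inner_sphereExp_smul q y hy s hs0 x₁ x₂ h1 h2
  have e2 := inner_sphereExp_smul q y hy 1 zero_le_one x₁ x₂ h1 h2
  simp only [one_smul, one_mul] at e2
  rw [e1, e2]
  set τ : ℝ := if x₁ = 0 ∨ x₂ = 0 then 1 else ⟪x₁, x₂⟫ / (‖x₁‖ * ‖x₂‖) with hτdef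
  have hτ : -1 ≤ τ ∧ τ ≤ 1 := by
    rw [hτdef]
    split_ifs with h0
    · norm_num
    · obtain ⟨hx1, hx2⟩ := not_or.mp h0
      have hpos : 0 < ‖x₁‖ * ‖x₂‖ := by
        have := norm_pos_iff.mpr hx1
        have := norm_pos_iff.mpr hx2
        positivity
      have hcs := abs_real_inner_le_norm x₁ x₂
      have habs : |⟪x₁, x₂⟫ / (‖x₁‖ * ‖x₂‖)| ≤ 1 := by
        rw [abs_div, abs_of_pos hpos, div_le_one hpos]
        exact hcs
      exact abs_le.mp habs
  exact scalar_lemma r s ‖x₁‖ ‖x₂‖ τ hr0 hr2 hs0 hs1 (norm_nonneg _) hn1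
    (norm_nonneg _) hn2 hτ.1 hτ.2
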